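/- The first Taylor coefficient of log((s−1)·ζ(s)) in the variable z = 1 − 1/s at z = 0 equals the Euler–Mascheroni constant γ; equivalently, the derivative at s = 1 of s ↦ log((s−1)·ζ(s)) equals γ, i.e. lim_{s→1} (ζ'(s)/ζ(s) + 1/(s−1)) = γ. -/

import Mathlib

open Filter Topology Function Complex

noncomputable def Gz : ℂ → ℂ := Function.update (fun s ↦ (s - 1) * riemannZeta s) 1 1

lemma Gz_analyticAt : AnalyticAt ℂ Gz 1 := by
  refine Complex.analyticAt_of_differentiable_on_punctured_nhds_of_continuousAt ?_ ?_
  · filter_upwards [self_mem_nhdsWithin] with t ht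
    rw [Set.mem_compl_singleton_iff] at ht
    have : ∀ᶠ s in 𝓝 t, Gz s = (s - 1) * riemannZeta s := by
      filter_upwards [compl_singleton_mem_nhds ht] with s hs
      exact Function.update_of_ne hs _ _
    refine DifferentiableAt.congr_of_eventuallyEq ?_ this
    exact ((differentiableAt_id.sub (differentiableAt_const _)).mul
      (differentiableAt_riemannZeta ht))
  · simpa only [Gz, continuousAt_update_same] using riemannZeta_residue_one

lemma Gz_deriv_one : deriv Gz 1 = (Real.eulerMascheroniConstant : ℂ) := by
  have h1 : Tendsto (fun s : ℂ ↦ (Gz s - Gz 1) / (s - 1)) (𝓝[≠] 1) (𝓝 (deriv Gz 1)) := by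
    have := Gz_analyticAt.differentiableAt.hasDerivAt
    rw [hasDerivAt_iff_tendsto_slope] at this
    refine this.congr fun s ↦ ?_
    simp [slope_def_field, div_eq_inv_mul, sub_div]
  have h2 : Tendsto (fun s : ℂ ↦ (Gz s - Gz 1) / (s - 1)) (𝓝[≠] 1)
      (𝓝 ((Real.eulerMascheroniConstant : ℝ) : ℂ)) := by
    refine tendsto_riemannZeta_sub_one_div.congr' ?_
    filter_upwards [self_mem_nhdsWithin] with s hs
    rw [Set.mem_compl_singleton_iff] at hs
    have hs1 : s - 1 ≠ 0 := sub_ne_zero.mpr hs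
    simp only [Gz, Function.update_of_ne hs, Function.update_self]
    field_simp
  exact tendsto_nhds_unique h1 h2

theorem stmt_8 :
    Filter.Tendsto
      (fun s : ℂ => deriv riemannZeta s / riemannZeta s + 1 / (s - 1))
      (nhdsWithin 1 {(1 : ℂ)}ᶜ)
      (nhds ((Real.eulerMascheroniConstant : ℝ) : ℂ)) := by
  have hG := Gz_analyticAt
  have hd : Tendsto (fun s ↦ deriv Gz s / Gz s) (𝓝[≠] 1)
      (𝓝 ((Real.eulerMascheroniConstant : ℝ) : ℂ)) := by
    have h1 : Tendsto (deriv Gz) (𝓝 1) (𝓝 (deriv Gz 1)) := by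
      have h0 : ContinuousAt (fun s ↦ (fderiv ℂ Gz s) 1) 1 :=
        (ContinuousLinearMap.apply ℂ ℂ (1:ℂ)).continuous.continuousAt.comp hG.fderiv.continuousAt
      simpa only [fderiv_apply_one_eq_deriv] using h0.tendsto
    have h2 : Tendsto Gz (𝓝 1) (𝓝 (Gz 1)) := hG.continuousAt
    have hG1 : Gz 1 = 1 := Function.update_self _ _ _
    have := (h1.div h2 (by rw [hG1]; exact one_ne_zero)).mono_left (nhdsWithin_le_nhds (s := {(1:ℂ)}ᶜ))
    rwa [Gz_deriv_one, hG1, div_one] at this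
  refine hd.congr' ?_
  have hne : ∀ᶠ s in 𝓝[≠] (1:ℂ), riemannZeta s ≠ 0 := by
    have := riemannZeta_residue_one.eventually_ne (one_ne_zero)
    filter_upwards [this] with s hs
    exact fun h ↦ hs (by rw [h, mul_zero])
  filter_upwards [self_mem_nhdsWithin, hne] with s hs hζ
  rw [Set.mem_compl_singleton_iff] at hs
  have hs1 : s - 1 ≠ 0 := sub_ne_zero.mpr hs
  have hGs : Gz s = (s - 1) * riemannZeta s := Function.update_of_ne hs _ _
  have hder : deriv Gz s = riemannZeta s + (s - 1) * deriv riemannZeta s := by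
    have heq : ∀ᶠ t in 𝓝 s, Gz t = (t - 1) * riemannZeta t := by
      filter_upwards [compl_singleton_mem_nhds hs] with t ht
      exact Function.update_of_ne ht _ _
    rw [Filter.EventuallyEq.deriv_eq heq]
    have h1 : HasDerivAt (fun t : ℂ ↦ t - 1) 1 s := (hasDerivAt_id s).sub_const 1
    have h2 : HasDerivAt riemannZeta (deriv riemannZeta s) s :=
      (differentiableAt_riemannZeta hs).hasDerivAt
    have := h1.mul h2
    rw [show (fun x : ℂ => (x - 1) * riemannZeta x) = (fun t => t - 1) * riemannZeta from rfl, this.deriv]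
    ring
  rw [hGs, hder]
  field_simp
  ring
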